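/- Let G be a connected finite simple graph with at least 3 vertices and let T_1, …, T_k (k ≥ 2) be spanning trees of G whose inner-vertex sets I(T_1), …, I(T_k) are pairwise disjoint. Let u and v be distinct vertices and let 1 ≤ i < j ≤ k. If the unique path between u and v in T_i and the unique path between u and v in T_j share a common edge, then it is not the case that both u and v are inner vertices of T_i, and it is not the case that both u and v are inner vertices of T_j. -/
import Mathlib


open SimpleGraph

variable {V : Type*}

/-- `T` is a spanning tree of `G`: a subgraph on all of `V` that is connected and acyclic. -/
def IsSpanningTree (G T : SimpleGraph V) : Prop :=
  T ≤ G ∧ T.Connected ∧ T.IsAcyclic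

/-- The set of inner vertices of `T` (degree at least 2). -/
def innerSet (T : SimpleGraph V) : Set V :=
  {v | 2 ≤ (T.neighborSet v).ncard}

/-- Vertices that are inner vertices of at least two trees of the family. -/
def innerMulti {k : ℕ} (T : Fin k → SimpleGraph V) : Set V :=
  {v | ∃ i j : Fin k, i ≠ j ∧ v ∈ innerSet (T i) ∧ v ∈ innerSet (T j)}

/-- Edges that belong to at least two trees of the family. -/
def edgeMulti {k : ℕ} (T : Fin k → SimpleGraph V) : Set (Sym2 V) :=
  {e | ∃ i j : Fin k, i ≠ j ∧ e ∈ (T i).edgeSet ∧ e ∈ (T j).edgeSet}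

/-- A connected dominating set. -/
def IsConnDomSet (G : SimpleGraph V) (D : Set V) : Prop :=
  (G.induce D).Connected ∧ ∀ v ∉ D, ∃ w ∈ D, G.Adj v w


/-- An internal vertex of a path has two distinct neighbors. -/
lemma internal_two_neighbors {H : SimpleGraph V} :
    ∀ {u v x : V} (p : H.Walk u v), p.IsPath → x ∈ p.support → x ≠ u → x ≠ v →
      ∃ n1 n2, n1 ≠ n2 ∧ H.Adj x n1 ∧ H.Adj x n2
  | u, _, x, .nil, hp, hx, hxu, hxv => by
      simp at hx; exact absurd hx hxu
  | u, v, x, .cons h q, hp, hx, hxu, hxv => by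
      rename_i w
      have hq : q.IsPath := hp.of_cons
      have hx' : x ∈ q.support := by
        simp only [SimpleGraph.Walk.support_cons, List.mem_cons] at hx
        exact hx.resolve_left hxu
      by_cases hxw : x = w
      · subst hxw
        cases q with
        | nil => exact absurd rfl hxv
        | @cons _ z _ h' q' =>
          refine ⟨u, z, ?_, h.symm, h'⟩
          intro huz
          have : u ∉ (SimpleGraph.Walk.cons h' q').support := by
            have := hp.2
            simp only [SimpleGraph.Walk.support_cons, List.nodup_cons] at this
            exact this.1
          exact this (by rw [huz]; simp)
      · exact internal_two_neighbors q hq hx' hxw hxv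

lemma inner_of_internal {H : SimpleGraph V} [Fintype V] {u v x : V} (p : H.Walk u v)
    (hp : p.IsPath) (hx : x ∈ p.support) (hxu : x ≠ u) (hxv : x ≠ v) :
    x ∈ innerSet H := by
  obtain ⟨n1, n2, hne, h1, h2⟩ := internal_two_neighbors p hp hx hxu hxv
  have : 1 < (H.neighborSet x).ncard :=
    (Set.one_lt_ncard (Set.toFinite _)).2 ⟨n1, h1, n2, h2, hne⟩
  exact this

/-- In a connected graph on at least 3 vertices, each edge has an inner endpoint. -/
lemma edge_endpoint_inner {H : SimpleGraph V} [Fintype V] (hconn : H.Connected)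
    (hV : 3 ≤ Fintype.card V) {a b : V} (hab : H.Adj a b) :
    a ∈ innerSet H ∨ b ∈ innerSet H := by
  classical
  by_cases ha : a ∈ innerSet H
  · exact Or.inl ha
  right
  have hb : b ∈ H.neighborSet a := hab
  have hsub : H.neighborSet a = {b} := by
    apply Set.eq_of_subset_of_subset
    · intro c' hc'
      by_contra hne
      simp only [Set.mem_singleton_iff] at hne
      exact ha ((Set.one_lt_ncard (Set.toFinite _)).2 ⟨c', hc', b, hb, hne⟩)
    · intro c' hc'; simp only [Set.mem_singleton_iff] at hc'; subst hc'; exact hb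
  obtain ⟨c, hca, hcb⟩ : ∃ c : V, c ≠ a ∧ c ≠ b := by
    by_contra hcon
    push_neg at hcon
    have hsub2 : (Finset.univ : Finset V) ⊆ {a, b} := by
      intro x _
      by_cases hxa : x = a
      · simp [hxa]
      · simp [hcon x hxa]
    have h1 := Finset.card_le_card hsub2
    simp only [Finset.card_univ] at h1
    have h2 : ({a, b} : Finset V).card ≤ 2 :=
      (Finset.card_insert_le _ _).trans (by simp)
    omega
  obtain ⟨w⟩ := hconn.preconnected a c
  have hpath : (w.toPath : H.Walk a c).IsPath := w.toPath.2
  have hpnil : ¬ (w.toPath : H.Walk a c).Nil := SimpleGraph.Walk.not_nil_of_ne hca.symm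
  have hadj : H.Adj a ((w.toPath : H.Walk a c).getVert 1) :=
    SimpleGraph.Walk.adj_snd hpnil
  have hb2 : (w.toPath : H.Walk a c).getVert 1 = b := by
    have h3 : (w.toPath : H.Walk a c).getVert 1 ∈ H.neighborSet a := hadj
    rw [hsub] at h3; exact h3
  have hbsupp : b ∈ (w.toPath : H.Walk a c).support := by
    rw [← hb2, SimpleGraph.Walk.mem_support_iff_exists_getVert]
    exact ⟨1, rfl, by rw [Nat.one_le_iff_ne_zero]; intro h0; exact hpnil (SimpleGraph.Walk.nil_iff_length_eq.2 h0)⟩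
  exact inner_of_internal _ hpath hbsupp hab.ne' hcb.symm

/-- If the unique `u`-`v` paths in two of the trees share an edge, then `u` and `v`
are not both inner vertices of `T i`, nor both inner vertices of `T j`. -/
theorem common_edge_not_both_inner [Fintype V] (G : SimpleGraph V) (hG : G.Connected)
    (hV : 3 ≤ Fintype.card V) (k : ℕ) (hk : 2 ≤ k)
    (T : Fin k → SimpleGraph V) (hT : ∀ m, IsSpanningTree G (T m))
    (hdisj : ∀ m m' : Fin k, m ≠ m' → Disjoint (innerSet (T m)) (innerSet (T m')))
    (u v : V) (huv : u ≠ v) (i j : Fin k) (hij : i < j)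
    (p : (T i).Walk u v) (hp : p.IsPath) (q : (T j).Walk u v) (hq : q.IsPath)
    (hshare : ∃ e : Sym2 V, e ∈ p.edges ∧ e ∈ q.edges) :
    ¬ (u ∈ innerSet (T i) ∧ v ∈ innerSet (T i)) ∧
    ¬ (u ∈ innerSet (T j) ∧ v ∈ innerSet (T j)) := by
  obtain ⟨e, hep, heq⟩ := hshare
  have hij' : i ≠ j := Fin.ne_of_lt hij
  have hconn_i : (T i).Connected := (hT i).2.1
  have hconn_j : (T j).Connected := (hT j).2.1
  have hdij := Set.disjoint_left.1 (hdisj i j hij')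
  have hdji := Set.disjoint_left.1 (hdisj j i hij'.symm)
  revert hep heq
  induction e using Sym2.ind with
  | _ a b =>
    intro hep heq
    have hei : (T i).Adj a b := p.edges_subset_edgeSet hep
    have hej : (T j).Adj a b := q.edges_subset_edgeSet heq
    have hap : a ∈ p.support := SimpleGraph.Walk.fst_mem_support_of_mem_edges p hep
    have hbp : b ∈ p.support := SimpleGraph.Walk.snd_mem_support_of_mem_edges p hep
    have haq : a ∈ q.support := SimpleGraph.Walk.fst_mem_support_of_mem_edges q heq
    have hbq : b ∈ q.support := SimpleGraph.Walk.snd_mem_support_of_mem_edges q heq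
    constructor
    · rintro ⟨hu, hv⟩
      have key : ∀ x, x ∈ innerSet (T j) → x ∈ p.support → False := by
        intro x hxj hxp
        by_cases hxu : x = u
        · exact hdji hxj (hxu ▸ hu)
        by_cases hxv : x = v
        · exact hdji hxj (hxv ▸ hv)
        exact hdji hxj (inner_of_internal p hp hxp hxu hxv)
      rcases edge_endpoint_inner hconn_j hV hej with h | h
      · exact key a h hap
      · exact key b h hbp
    · rintro ⟨hu, hv⟩
      have key : ∀ x, x ∈ innerSet (T i) → x ∈ q.support → False := by
        intro x hxi hxq
        by_cases hxu : x = u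
        · exact hdij hxi (hxu ▸ hu)
        by_cases hxv : x = v
        · exact hdij hxi (hxv ▸ hv)
        exact hdij hxi (inner_of_internal q hq hxq hxu hxv)
      rcases edge_endpoint_inner hconn_i hV hei with h | h
      · exact key a h haq
      · exact key b h hbq
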